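/- For every fixed k ∈ ℕ and z ∈ ℝ, the normalized Krawtchouk polynomial converges to the normalized Hermite polynomial: C(n,k)^{-1/2} · K_k^{(n)}((n - z√n)/2) → h_k(z) as n → ∞. -/

import Mathlib

/-- The normalized Hermite polynomial
`h_k(z) = (1/√(k!)) (-1)^k e^{z²/2} (d^k/dz^k) e^{-z²/2}`. -/
noncomputable def hermiteN (k : ℕ) (z : ℝ) : ℝ :=
  (1 / Real.sqrt (Nat.factorial k)) * (-1 : ℝ) ^ k * Real.exp (z ^ 2 / 2) *
    iteratedDeriv k (fun t => Real.exp (-t ^ 2 / 2)) z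

/-- Generalized binomial coefficient `C(t, j)` for real `t`. -/
noncomputable def genChoose (t : ℝ) (j : ℕ) : ℝ :=
  (∏ i ∈ Finset.range j, (t - i)) / Nat.factorial j

/-- The Krawtchouk polynomial `K_k^{(n)}(t) = ∑_j (-1)^j C(t,j) C(n-t,k-j)`. -/
noncomputable def kraw (n k : ℕ) (t : ℝ) : ℝ :=
  ∑ j ∈ Finset.range (k + 1),
    (-1 : ℝ) ^ j * genChoose t j * genChoose ((n : ℝ) - t) (k - j)

open Filter

lemma s8_genChoose_zero (x : ℝ) : genChoose x 0 = 1 := by simp [genChoose]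

lemma s8_genChoose_one (x : ℝ) : genChoose x 1 = x := by simp [genChoose]

lemma s8_genChoose_succ (x : ℝ) (j : ℕ) :
    ((j:ℝ)+1) * genChoose x (j+1) = (x - j) * genChoose x j := by
  simp only [genChoose, Finset.prod_range_succ, Nat.factorial_succ]
  have h1 : (Nat.factorial j : ℝ) ≠ 0 := Nat.cast_ne_zero.2 (Nat.factorial_ne_zero j)
  push_cast
  field_simp

lemma s8_derivative_hermite : ∀ n : ℕ,
    Polynomial.derivative (Polynomial.hermite (n+1)) = ((n:ℤ)+1) • Polynomial.hermite n
  | 0 => by simp [Polynomial.hermite_one]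
  | n+1 => by
    rw [Polynomial.hermite_succ (n+1), Polynomial.derivative_sub, Polynomial.derivative_mul,
      Polynomial.derivative_X, one_mul, s8_derivative_hermite n, Polynomial.derivative_smul]
    simp only [zsmul_eq_mul, Polynomial.hermite_succ n]
    push_cast
    ring

lemma s8_aeval_hermite_rec (k : ℕ) (z : ℝ) :
    Polynomial.aeval z (Polynomial.hermite (k+2)) =
      z * Polynomial.aeval z (Polynomial.hermite (k+1)) -
        ((k:ℝ)+1) * Polynomial.aeval z (Polynomial.hermite k) := by
  rw [Polynomial.hermite_succ (k+1), s8_derivative_hermite k]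
  simp [zsmul_eq_mul]

lemma s8_hermiteN_eq (k : ℕ) (z : ℝ) :
    hermiteN k z = (Real.sqrt (Nat.factorial k))⁻¹ * Polynomial.aeval z (Polynomial.hermite k) := by
  unfold hermiteN
  have h : (fun t : ℝ => Real.exp (-t ^ 2 / 2)) = fun y : ℝ => Real.exp (-(y ^ 2 / 2)) := by
    funext y; ring_nf
  rw [h, iteratedDeriv_eq_iterate, Polynomial.deriv_gaussian_eq_hermite_mul_gaussian]
  have h2 : (-1:ℝ)^k * (-1)^k = 1 := by rw [← mul_pow]; norm_num
  have h3 : Real.exp (z ^ 2 / 2) * Real.exp (-(z ^ 2 / 2)) = 1 := by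
    rw [← Real.exp_add]; norm_num
  calc 1 / Real.sqrt (Nat.factorial k) * (-1:ℝ) ^ k * Real.exp (z ^ 2 / 2) *
      ((-1) ^ k * (Polynomial.aeval z) (Polynomial.hermite k) * Real.exp (-(z ^ 2 / 2)))
      = (Real.sqrt (Nat.factorial k))⁻¹ * (Polynomial.aeval z) (Polynomial.hermite k) *
        (((-1:ℝ)^k * (-1)^k) * (Real.exp (z ^ 2 / 2) * Real.exp (-(z ^ 2 / 2)))) := by
        rw [one_div]; ring
    _ = _ := by rw [h2, h3]; ring

lemma s8_hermiteN_rec (k : ℕ) (z : ℝ) :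
    hermiteN (k+2) z = (z * hermiteN (k+1) z - Real.sqrt ((k:ℝ)+1) * hermiteN k z) /
      Real.sqrt ((k:ℝ)+2) := by
  rw [s8_hermiteN_eq, s8_hermiteN_eq, s8_hermiteN_eq, s8_aeval_hermite_rec]
  have hf : (0:ℝ) < Real.sqrt (Nat.factorial k) := Real.sqrt_pos.2 (by positivity)
  have h1 : (0:ℝ) < Real.sqrt ((k:ℝ)+1) := Real.sqrt_pos.2 (by positivity)
  have h2 : (0:ℝ) < Real.sqrt ((k:ℝ)+2) := Real.sqrt_pos.2 (by positivity)
  have e1 : Real.sqrt (Nat.factorial (k+1)) = Real.sqrt ((k:ℝ)+1) * Real.sqrt (Nat.factorial k) := by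
    rw [← Real.sqrt_mul (by positivity)]
    norm_num [Nat.factorial_succ]
  have e2 : Real.sqrt (Nat.factorial (k+2)) =
      Real.sqrt ((k:ℝ)+2) * Real.sqrt (Nat.factorial (k+1)) := by
    rw [← Real.sqrt_mul (by positivity)]
    norm_num [Nat.factorial_succ]
    ring_nf
  have m1 : Real.sqrt ((k:ℝ)+1) * Real.sqrt ((k:ℝ)+1) = (k:ℝ)+1 :=
    Real.mul_self_sqrt (by positivity)
  rw [e2, e1]
  field_simp
  linear_combination (Polynomial.aeval z (Polynomial.hermite k)) * m1

lemma s8_sum_left (t u : ℝ) (p : ℕ) :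
    ∑ j ∈ Finset.range (p+2), (j:ℝ) * ((-1:ℝ)^j * genChoose t j * genChoose u ((p+1)-j))
    = -∑ j ∈ Finset.range (p+1), (t - j) * ((-1:ℝ)^j * genChoose t j * genChoose u (p-j)) := by
  rw [Finset.sum_range_succ'
    (fun j => (j:ℝ) * ((-1:ℝ)^j * genChoose t j * genChoose u ((p+1)-j))) (p+1)]
  simp only [Nat.cast_zero, zero_mul, add_zero, ← Finset.sum_neg_distrib]
  apply Finset.sum_congr rfl
  intro j hj
  have h2 := s8_genChoose_succ t j
  push_cast
  rw [pow_succ]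
  linear_combination (-(-1:ℝ)^j * genChoose u (p-j)) * h2

lemma s8_sum_right (t u : ℝ) (p : ℕ) :
    ∑ j ∈ Finset.range (p+2), (((p+1) - j : ℕ):ℝ) * ((-1:ℝ)^j * genChoose t j * genChoose u ((p+1)-j))
    = ∑ j ∈ Finset.range (p+1), (u - ((p - j : ℕ):ℝ)) * ((-1:ℝ)^j * genChoose t j * genChoose u (p-j)) := by
  rw [Finset.sum_range_succ]
  simp only [Nat.sub_self, Nat.cast_zero, zero_mul, add_zero]
  apply Finset.sum_congr rfl
  intro j hj
  have hj' : j ≤ p := Nat.lt_succ_iff.mp (Finset.mem_range.mp hj)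
  have h1 : (p+1) - j = (p - j) + 1 := by omega
  have h2 := s8_genChoose_succ u (p-j)
  rw [h1]
  push_cast
  linear_combination ((-1:ℝ)^j * genChoose t j) * h2

lemma s8_expand_sum (t u : ℝ) (p : ℕ) :
    ((p:ℝ)+1) * (∑ j ∈ Finset.range (p+2), (-1:ℝ)^j * genChoose t j * genChoose u ((p+1)-j))
    = -∑ j ∈ Finset.range (p+1), (t - j) * ((-1:ℝ)^j * genChoose t j * genChoose u (p-j))
      + ∑ j ∈ Finset.range (p+1), (u - ((p - j : ℕ):ℝ)) * ((-1:ℝ)^j * genChoose t j * genChoose u (p-j)) := by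
  rw [← s8_sum_left t u p, ← s8_sum_right t u p, Finset.mul_sum, ← Finset.sum_add_distrib]
  apply Finset.sum_congr rfl
  intro j hj
  have hj' : j ≤ p + 1 := Nat.lt_succ_iff.mp (Finset.mem_range.mp hj)
  have : (((p+1) - j:ℕ):ℝ) = (p:ℝ) + 1 - (j:ℝ) := by
    rw [Nat.cast_sub hj']; push_cast; ring
  rw [this]; ring

lemma s8_kraw_rec (n k : ℕ) (t : ℝ) :
    ((k:ℝ)+2) * kraw n (k+2) t = ((n:ℝ) - 2*t) * kraw n (k+1) t - ((n:ℝ) - (k:ℝ)) * kraw n k t := by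
  set u := (n:ℝ) - t with hu
  have h0 : ((k:ℝ)+2) * kraw n (k+2) t
      = -∑ j ∈ Finset.range (k+2), (t - j) * ((-1:ℝ)^j * genChoose t j * genChoose u ((k+1)-j))
        + ∑ j ∈ Finset.range (k+2), (u - (((k+1) - j : ℕ):ℝ)) * ((-1:ℝ)^j * genChoose t j * genChoose u ((k+1)-j)) := by
    have := s8_expand_sum t u (k+1)
    unfold kraw
    push_cast at this ⊢
    convert this using 2 <;> ring_nf
  have h1 : ∀ j ∈ Finset.range (k+2),
      (u - (((k+1) - j : ℕ):ℝ)) * ((-1:ℝ)^j * genChoose t j * genChoose u ((k+1)-j))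
      - (t - j) * ((-1:ℝ)^j * genChoose t j * genChoose u ((k+1)-j))
      = (u - t) * ((-1:ℝ)^j * genChoose t j * genChoose u ((k+1)-j))
        + ((j:ℝ) * ((-1:ℝ)^j * genChoose t j * genChoose u ((k+1)-j))
          - (((k+1) - j : ℕ):ℝ) * ((-1:ℝ)^j * genChoose t j * genChoose u ((k+1)-j))) := by
    intro j hj
    have hj' : j ≤ k + 1 := Nat.lt_succ_iff.mp (Finset.mem_range.mp hj)
    have : (((k+1) - j:ℕ):ℝ) = (k:ℝ) + 1 - (j:ℝ) := by rw [Nat.cast_sub hj']; push_cast; ring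
    rw [this]; ring
  rw [h0, neg_add_eq_sub, ← Finset.sum_sub_distrib]
  rw [Finset.sum_congr rfl h1, Finset.sum_add_distrib, Finset.sum_sub_distrib]
  rw [s8_sum_left t u k, s8_sum_right t u k, ← Finset.mul_sum]
  have h2 : ∀ j ∈ Finset.range (k+1),
      -((t - j) * ((-1:ℝ)^j * genChoose t j * genChoose u (k-j)))
      - (u - ((k - j : ℕ):ℝ)) * ((-1:ℝ)^j * genChoose t j * genChoose u (k-j))
      = -((t + u - k) * ((-1:ℝ)^j * genChoose t j * genChoose u (k-j))) := by
    intro j hj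
    have hj' : j ≤ k := Nat.lt_succ_iff.mp (Finset.mem_range.mp hj)
    have : ((k - j:ℕ):ℝ) = (k:ℝ) - (j:ℝ) := by rw [Nat.cast_sub hj']
    rw [this]; ring
  rw [← Finset.sum_neg_distrib, ← Finset.sum_sub_distrib, Finset.sum_congr rfl h2,
    Finset.sum_neg_distrib, ← Finset.mul_sum]
  unfold kraw
  rw [hu]
  ring

lemma s8_lim_ratio (a b : ℝ) :
    Filter.Tendsto (fun n : ℕ => ((n:ℝ) + a)/((n:ℝ) + b)) Filter.atTop (nhds 1) := by
  have hb : Filter.Tendsto (fun n : ℕ => (n:ℝ) + b) Filter.atTop Filter.atTop :=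
    Filter.tendsto_atTop_add_const_right _ b tendsto_natCast_atTop_atTop
  have h0 : Filter.Tendsto (fun n : ℕ => 1 + (a - b)/((n:ℝ) + b)) Filter.atTop (nhds 1) := by
    have h := (tendsto_const_nhds (x := (1:ℝ))).add (hb.inv_tendsto_atTop.const_mul (a - b))
    simpa [div_eq_mul_inv] using h
  apply h0.congr'
  filter_upwards [hb.eventually_gt_atTop 0] with n hn
  field_simp
  ring

lemma s8_lim_sqrt_ratio (a b : ℝ) :
    Filter.Tendsto (fun n : ℕ => Real.sqrt (((n:ℝ) + a)/((n:ℝ) + b))) Filter.atTop (nhds 1) := by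
  simpa using (s8_lim_ratio a b).sqrt

/-- The normalized Krawtchouk value. -/
noncomputable def s8Q (z : ℝ) (k : ℕ) (n : ℕ) : ℝ :=
  (Real.sqrt (Nat.choose n k))⁻¹ * kraw n k (((n : ℝ) - z * Real.sqrt n) / 2)

lemma s8_sq_eq {a b : ℝ} (ha : 0 ≤ a) (hb : 0 ≤ b) (h : a^2 = b^2) : a = b := by nlinarith

lemma s8_step (z : ℝ) (k : ℕ)
    (h0 : Tendsto (s8Q z k) atTop (nhds (hermiteN k z)))
    (h1 : Tendsto (s8Q z (k+1)) atTop (nhds (hermiteN (k+1) z))) :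
    Tendsto (s8Q z (k+2)) atTop (nhds (hermiteN (k+2) z)) := by
  set A : ℕ → ℝ := fun n =>
    z / Real.sqrt ((k:ℝ)+2) * Real.sqrt (((n:ℝ))/((n:ℝ) - ((k:ℝ)+1))) with hA
  set B : ℕ → ℝ := fun n =>
    Real.sqrt (((k:ℝ)+1)/((k:ℝ)+2)) * Real.sqrt (((n:ℝ) - (k:ℝ))/((n:ℝ) - ((k:ℝ)+1))) with hB
  have limA : Tendsto A atTop (nhds (z / Real.sqrt ((k:ℝ)+2))) := by
    have h := (s8_lim_sqrt_ratio 0 (-((k:ℝ)+1))).const_mul (z / Real.sqrt ((k:ℝ)+2))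
    simp only [mul_one] at h
    apply h.congr
    intro n
    rw [hA]
    norm_num [sub_eq_add_neg]
  have limB : Tendsto B atTop (nhds (Real.sqrt (((k:ℝ)+1)/((k:ℝ)+2)))) := by
    have h := (s8_lim_sqrt_ratio (-(k:ℝ)) (-((k:ℝ)+1))).const_mul
      (Real.sqrt (((k:ℝ)+1)/((k:ℝ)+2)))
    simp only [mul_one] at h
    apply h.congr
    intro n
    rw [hB]
    norm_num [sub_eq_add_neg]
  have main : Tendsto (fun n => A n * s8Q z (k+1) n - B n * s8Q z k n) atTop
      (nhds (z / Real.sqrt ((k:ℝ)+2) * hermiteN (k+1) z -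
        Real.sqrt (((k:ℝ)+1)/((k:ℝ)+2)) * hermiteN k z)) :=
    (limA.mul h1).sub (limB.mul h0)
  have hval : z / Real.sqrt ((k:ℝ)+2) * hermiteN (k+1) z -
      Real.sqrt (((k:ℝ)+1)/((k:ℝ)+2)) * hermiteN k z = hermiteN (k+2) z := by
    rw [s8_hermiteN_rec k z, Real.sqrt_div (by positivity : (0:ℝ) ≤ (k:ℝ)+1)]
    have h2 : Real.sqrt ((k:ℝ)+2) ≠ 0 := by positivity
    field_simp
  rw [← hval]
  apply main.congr'
  filter_upwards [eventually_ge_atTop (k+2)] with n hn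
  have hk1n : (k:ℝ)+1 ≤ (n:ℝ) := by exact_mod_cast Nat.le_of_succ_le hn
  have hkn : (k:ℝ) < (n:ℝ) := by linarith
  have hn2 : (k:ℝ)+2 ≤ (n:ℝ) := by exact_mod_cast hn
  set t : ℝ := ((n : ℝ) - z * Real.sqrt n) / 2 with ht
  have c0pos : (0:ℝ) < (Nat.choose n k : ℝ) := by
    exact_mod_cast Nat.choose_pos (by omega)
  have c1pos : (0:ℝ) < (Nat.choose n (k+1) : ℝ) := by
    exact_mod_cast Nat.choose_pos (by omega)
  have c2pos : (0:ℝ) < (Nat.choose n (k+2) : ℝ) := by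
    exact_mod_cast Nat.choose_pos (by omega)
  have r2 : ((k:ℝ)+2) * (Nat.choose n (k+2) : ℝ)
      = ((n:ℝ) - ((k:ℝ)+1)) * (Nat.choose n (k+1) : ℝ) := by
    have h := Nat.choose_succ_right_eq n (k+1)
    have hcast : ((n - (k+1) : ℕ) : ℝ) = (n:ℝ) - ((k:ℝ)+1) := by
      rw [Nat.cast_sub (by omega)]; push_cast; ring
    have h' := congrArg (fun x : ℕ => (x : ℝ)) h
    push_cast at h'
    rw [← hcast]
    push_cast
    linarith
  have r1 : ((k:ℝ)+1) * (Nat.choose n (k+1) : ℝ) = ((n:ℝ) - (k:ℝ)) * (Nat.choose n k : ℝ) := by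
    have h := Nat.choose_succ_right_eq n k
    have hcast : ((n - k : ℕ) : ℝ) = (n:ℝ) - (k:ℝ) := by
      rw [Nat.cast_sub (by omega)]
    have h' := congrArg (fun x : ℕ => (x : ℝ)) h
    push_cast at h'
    rw [← hcast]
    push_cast
    linarith
  set s0 := Real.sqrt (Nat.choose n k) with hs0
  set s1 := Real.sqrt (Nat.choose n (k+1)) with hs1
  set s2 := Real.sqrt (Nat.choose n (k+2)) with hs2
  have s0pos : 0 < s0 := Real.sqrt_pos.2 c0pos
  have s1pos : 0 < s1 := Real.sqrt_pos.2 c1pos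
  have s2pos : 0 < s2 := Real.sqrt_pos.2 c2pos
  have hd : (0:ℝ) < (n:ℝ) - ((k:ℝ)+1) := by linarith
  have key : Real.sqrt (((n:ℝ))/((n:ℝ) - ((k:ℝ)+1))) / Real.sqrt ((k:ℝ)+2)
      = Real.sqrt n * s1 / (((k:ℝ)+2) * s2) := by
    apply s8_sq_eq (by positivity) (by positivity)
    have l1 : (Real.sqrt (((n:ℝ))/((n:ℝ) - ((k:ℝ)+1))) / Real.sqrt ((k:ℝ)+2))^2
        = (((n:ℝ))/((n:ℝ) - ((k:ℝ)+1))) / ((k:ℝ)+2) := by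
      rw [div_pow, Real.sq_sqrt (div_nonneg (by positivity) hd.le),
        Real.sq_sqrt (by positivity : (0:ℝ) ≤ (k:ℝ)+2)]
    have l2 : (Real.sqrt n * s1 / (((k:ℝ)+2) * s2))^2
        = (n:ℝ) * (Nat.choose n (k+1) : ℝ) / (((k:ℝ)+2)^2 * (Nat.choose n (k+2) : ℝ)) := by
      rw [div_pow, mul_pow, mul_pow, Real.sq_sqrt (by positivity : (0:ℝ) ≤ (n:ℝ)),
        hs1, hs2, Real.sq_sqrt c1pos.le, Real.sq_sqrt c2pos.le]
    rw [l1, l2, div_div, div_eq_div_iff (by positivity) (by positivity)]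
    linear_combination ((n:ℝ) * ((k:ℝ)+2)) * r2
  have eA : A n = z * Real.sqrt n * s1 / (((k:ℝ)+2) * s2) := by
    show z / Real.sqrt ((k:ℝ)+2) * Real.sqrt (((n:ℝ))/((n:ℝ) - ((k:ℝ)+1)))
      = z * Real.sqrt n * s1 / (((k:ℝ)+2) * s2)
    calc z / Real.sqrt ((k:ℝ)+2) * Real.sqrt (((n:ℝ))/((n:ℝ) - ((k:ℝ)+1)))
        = z * (Real.sqrt (((n:ℝ))/((n:ℝ) - ((k:ℝ)+1))) / Real.sqrt ((k:ℝ)+2)) := by ring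
      _ = z * (Real.sqrt n * s1 / (((k:ℝ)+2) * s2)) := by rw [key]
      _ = z * Real.sqrt n * s1 / (((k:ℝ)+2) * s2) := by ring
  have eB : B n = ((n:ℝ) - (k:ℝ)) * s0 / (((k:ℝ)+2) * s2) := by
    show Real.sqrt (((k:ℝ)+1)/((k:ℝ)+2)) * Real.sqrt (((n:ℝ) - (k:ℝ))/((n:ℝ) - ((k:ℝ)+1)))
      = ((n:ℝ) - (k:ℝ)) * s0 / (((k:ℝ)+2) * s2)
    apply s8_sq_eq (by positivity)
      (div_nonneg (mul_nonneg (by linarith) s0pos.le) (by positivity))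
    have l1 : (Real.sqrt (((k:ℝ)+1)/((k:ℝ)+2)) * Real.sqrt (((n:ℝ) - (k:ℝ))/((n:ℝ) - ((k:ℝ)+1))))^2
        = (((k:ℝ)+1)/((k:ℝ)+2)) * (((n:ℝ) - (k:ℝ))/((n:ℝ) - ((k:ℝ)+1))) := by
      rw [mul_pow, Real.sq_sqrt (by positivity : (0:ℝ) ≤ ((k:ℝ)+1)/((k:ℝ)+2)),
        Real.sq_sqrt (div_nonneg (by linarith) hd.le)]
    have l2 : (((n:ℝ) - (k:ℝ)) * s0 / (((k:ℝ)+2) * s2))^2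
        = ((n:ℝ) - (k:ℝ))^2 * (Nat.choose n k : ℝ) / (((k:ℝ)+2)^2 * (Nat.choose n (k+2) : ℝ)) := by
      rw [div_pow, mul_pow, mul_pow, hs0, hs2, Real.sq_sqrt c0pos.le, Real.sq_sqrt c2pos.le]
    rw [l1, l2, div_mul_div_comm, div_eq_div_iff (by positivity) (by positivity)]
    linear_combination (((k:ℝ)+1) * ((n:ℝ)-(k:ℝ)) * ((k:ℝ)+2)) * r2
      + (((n:ℝ)-(k:ℝ)) * ((k:ℝ)+2) * ((n:ℝ)-((k:ℝ)+1))) * r1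
  have hrec := s8_kraw_rec n k t
  have hnt : (n:ℝ) - 2 * t = z * Real.sqrt n := by rw [ht]; ring
  rw [hnt] at hrec
  show A n * s8Q z (k+1) n - B n * s8Q z k n = s8Q z (k+2) n
  rw [eA, eB]
  unfold s8Q
  rw [← hs0, ← hs1, ← hs2, ← ht]
  field_simp
  linear_combination (-1:ℝ) * hrec

lemma s8_base0 (z : ℝ) : Tendsto (s8Q z 0) atTop (nhds (hermiteN 0 z)) := by
  have h : hermiteN 0 z = 1 := by
    rw [s8_hermiteN_eq]; simp [Polynomial.hermite_zero]
  rw [h]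
  have heq : s8Q z 0 = fun _ => (1:ℝ) := by
    funext n
    simp [s8Q, kraw, s8_genChoose_zero]
  rw [heq]
  exact tendsto_const_nhds

lemma s8_base1 (z : ℝ) : Tendsto (s8Q z 1) atTop (nhds (hermiteN 1 z)) := by
  have h : hermiteN 1 z = z := by
    rw [s8_hermiteN_eq]; simp [Polynomial.hermite_one]
  rw [h]
  have hq : ∀ n : ℕ, 1 ≤ n → s8Q z 1 n = z := by
    intro n hn
    have hk : kraw n 1 (((n : ℝ) - z * Real.sqrt n) / 2) = z * Real.sqrt n := by
      simp [kraw, Finset.sum_range_succ, s8_genChoose_zero, s8_genChoose_one]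
      ring
    have hs : Real.sqrt n ≠ 0 := by
      have : (0:ℝ) < n := by exact_mod_cast hn
      positivity
    rw [s8Q, hk, Nat.choose_one_right]
    field_simp
  apply (tendsto_const_nhds (x := z)).congr'
  filter_upwards [eventually_ge_atTop 1] with n hn
  exact (hq n hn).symm

theorem stmt8 (k : ℕ) (z : ℝ) :
    Filter.Tendsto
      (fun n : ℕ =>
        (Real.sqrt (Nat.choose n k))⁻¹ * kraw n k (((n : ℝ) - z * Real.sqrt n) / 2))
      Filter.atTop (nhds (hermiteN k z)) := by
  have key : ∀ m : ℕ, Tendsto (s8Q z m) atTop (nhds (hermiteN m z)) ∧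
      Tendsto (s8Q z (m+1)) atTop (nhds (hermiteN (m+1) z)) := by
    intro m
    induction m with
    | zero => exact ⟨s8_base0 z, s8_base1 z⟩
    | succ m ih => exact ⟨ih.2, s8_step z m ih.1 ih.2⟩
  exact (key k).1
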